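/- Let x be a nonnegative random variable such that for some c > 0 and all t > 0, P(x ≥ c + t) ≤ exp(−t²/2). Then for any a ≥ 0, E[shrink_{a+c}(x)²] ≤ (2/(a²+1))·exp(−a²/2), where shrink_λ(x) = max(x − λ, 0) for x ≥ 0. -/

import Mathlib

open MeasureTheory Set Filter Real

lemma stmt12_aux (a : ℝ) (ha : 0 ≤ a) :
    IntegrableOn (fun t => Real.exp (-(a + t) ^ 2 / 2) * (2 * t)) (Ioi (0:ℝ)) ∧
      ∫ t in Ioi (0:ℝ), Real.exp (-(a + t) ^ 2 / 2) * (2 * t)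
        ≤ 2 / (a ^ 2 + 1) * Real.exp (-a ^ 2 / 2) := by
  set F : ℝ → ℝ := fun t => (2 - 2 * a * (a + t) / ((a + t) ^ 2 + 1)) * Real.exp (-(a + t) ^ 2 / 2) with hF
  set h : ℝ → ℝ := fun t => (2 * t + 4 * a / ((a + t) ^ 2 + 1) ^ 2) * Real.exp (-(a + t) ^ 2 / 2) with hh
  have hden : ∀ t : ℝ, ((a + t) ^ 2 + 1) ≠ 0 := fun t => by positivity
  have hderiv : ∀ t ∈ Ici (0:ℝ), HasDerivAt F (-(h t)) t := by
    intro t _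
    have h1 : HasDerivAt (fun t : ℝ => a + t) 1 t := (hasDerivAt_id t).const_add a
    have h2 : HasDerivAt (fun t : ℝ => (a + t) ^ 2) (2 * (a + t)) t := by
      simpa using h1.fun_pow 2
    have h3 : HasDerivAt (fun t : ℝ => -(a + t) ^ 2 / 2) (-(2 * (a + t)) / 2) t :=
      h2.neg.div_const 2
    have h4 : HasDerivAt (fun t : ℝ => Real.exp (-(a + t) ^ 2 / 2))
        (Real.exp (-(a + t) ^ 2 / 2) * (-(2 * (a + t)) / 2)) t := h3.exp
    have h5 : HasDerivAt (fun t : ℝ => (a + t) / ((a + t) ^ 2 + 1))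
        ((1 * ((a + t) ^ 2 + 1) - (a + t) * (2 * (a + t))) / ((a + t) ^ 2 + 1) ^ 2) t :=
      h1.div (h2.add_const 1) (hden t)
    have h6 : HasDerivAt (fun t : ℝ => 2 - 2 * a * ((a + t) / ((a + t) ^ 2 + 1)))
        (-(2 * a * ((1 * ((a + t) ^ 2 + 1) - (a + t) * (2 * (a + t))) / ((a + t) ^ 2 + 1) ^ 2))) t :=
      (h5.const_mul (2 * a)).const_sub 2
    have h7 : HasDerivAt (fun t : ℝ => (2 - 2 * a * ((a + t) / ((a + t) ^ 2 + 1))) *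
        Real.exp (-(a + t) ^ 2 / 2)) _ t := h6.fun_mul h4
    have heq : (fun t : ℝ => (2 - 2 * a * ((a + t) / ((a + t) ^ 2 + 1))) *
        Real.exp (-(a + t) ^ 2 / 2)) = F := by
      funext s; rw [hF]; ring_nf
    rw [heq] at h7
    convert h7 using 1
    rw [hh]
    field_simp
    ring
  have hnonpos : ∀ t ∈ Ioi (0:ℝ), -(h t) ≤ 0 := by
    intro t ht
    simp only [neg_nonpos, hh]
    have h1 : (0:ℝ) < t := ht
    have h2 : (0:ℝ) ≤ 4 * a / ((a + t) ^ 2 + 1) ^ 2 := by positivity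
    exact mul_nonneg (by linarith) (Real.exp_nonneg _)
  have hexp : Tendsto (fun t : ℝ => Real.exp (-(a + t) ^ 2 / 2)) atTop (nhds 0) := by
    apply Real.tendsto_exp_atBot.comp
    have h1 : Tendsto (fun t : ℝ => a + t) atTop atTop :=
      tendsto_atTop_add_const_left _ a tendsto_id
    have h2 : Tendsto (fun t : ℝ => (a + t) ^ 2) atTop atTop :=
      (tendsto_pow_atTop two_ne_zero).comp h1
    exact (tendsto_neg_atBot_iff.mpr h2).atBot_div_const two_pos
  have htend : Tendsto F atTop (nhds 0) := by
    have h2exp : Tendsto (fun t : ℝ => 2 * Real.exp (-(a + t) ^ 2 / 2)) atTop (nhds 0) := by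
      simpa using hexp.const_mul 2
    apply tendsto_of_tendsto_of_tendsto_of_le_of_le' (tendsto_const_nhds) h2exp
    · filter_upwards [eventually_ge_atTop (0:ℝ)] with t ht
      apply mul_nonneg _ (Real.exp_nonneg _)
      have hd : (0:ℝ) < (a + t) ^ 2 + 1 := by positivity
      rw [sub_nonneg, div_le_iff₀ hd]
      nlinarith
    · filter_upwards [eventually_ge_atTop (0:ℝ)] with t ht
      have hfac : 2 - 2 * a * (a + t) / ((a + t) ^ 2 + 1) ≤ 2 := by
        have : 0 ≤ 2 * a * (a + t) / ((a + t) ^ 2 + 1) := by positivity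
        linarith
      exact mul_le_mul_of_nonneg_right hfac (Real.exp_nonneg _)
  have hint : IntegrableOn (fun t => -(h t)) (Ioi (0:ℝ)) :=
    integrableOn_Ioi_deriv_of_nonpos' hderiv hnonpos htend
  have hinth : IntegrableOn h (Ioi (0:ℝ)) := by
    have := hint.neg
    refine this.congr (Filter.Eventually.of_forall fun t => by simp)
  have hkey : ∫ t in Ioi (0:ℝ), -(h t) = 0 - F 0 :=
    integral_Ioi_of_hasDerivAt_of_nonpos' hderiv hnonpos htend
  have hinteq : ∫ t in Ioi (0:ℝ), h t = F 0 := by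
    have := hkey
    rw [integral_neg] at this
    linarith
  have hF0 : F 0 = 2 / (a ^ 2 + 1) * Real.exp (-a ^ 2 / 2) := by
    rw [hF]
    simp only [add_zero]
    have hd : (a ^ 2 + 1) ≠ 0 := by positivity
    field_simp
    ring
  have hle : ∀ t ∈ Ioi (0:ℝ), Real.exp (-(a + t) ^ 2 / 2) * (2 * t) ≤ h t := by
    intro t ht
    rw [hh]
    have h2 : (0:ℝ) ≤ 4 * a / ((a + t) ^ 2 + 1) ^ 2 := by positivity
    nlinarith [Real.exp_nonneg (-(a + t) ^ 2 / 2)]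
  have hintg : IntegrableOn (fun t => Real.exp (-(a + t) ^ 2 / 2) * (2 * t)) (Ioi (0:ℝ)) := by
    apply hinth.mono' (Continuous.aestronglyMeasurable (by continuity))
    filter_upwards [ae_restrict_mem measurableSet_Ioi] with t ht
    rw [Real.norm_eq_abs, abs_of_nonneg (mul_nonneg (Real.exp_nonneg _) (by linarith [ht.out] : (0:ℝ) ≤ 2 * t))]
    exact hle t ht
  refine ⟨hintg, ?_⟩
  calc ∫ t in Ioi (0:ℝ), Real.exp (-(a + t) ^ 2 / 2) * (2 * t)
      ≤ ∫ t in Ioi (0:ℝ), h t :=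
        setIntegral_mono_on hintg hinth measurableSet_Ioi hle
    _ = 2 / (a ^ 2 + 1) * Real.exp (-a ^ 2 / 2) := by rw [hinteq, hF0]

theorem stmt12 {Ω : Type*} [MeasurableSpace Ω] (μ : Measure Ω) [IsProbabilityMeasure μ]
    (X : Ω → ℝ) (hX : ∀ ω, 0 ≤ X ω) (c : ℝ) (hc : 0 < c)
    (htail : ∀ t > (0 : ℝ), μ {ω | c + t ≤ X ω} ≤ ENNReal.ofReal (Real.exp (-t ^ 2 / 2)))
    (a : ℝ) (ha : 0 ≤ a) :
    ∫ ω, max (X ω - (a + c)) 0 ^ 2 ∂μ ≤ 2 / (a ^ 2 + 1) * Real.exp (-a ^ 2 / 2) := by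
  have hRHS : (0:ℝ) ≤ 2 / (a ^ 2 + 1) * Real.exp (-a ^ 2 / 2) := by positivity
  by_cases hsm : AEStronglyMeasurable (fun ω => max (X ω - (a + c)) 0 ^ 2) μ
  swap
  · rw [integral_non_aestronglyMeasurable hsm]; exact hRHS
  set Y : Ω → ℝ := fun ω => max (X ω - (a + c)) 0 with hY
  have hYnn : ∀ ω, 0 ≤ Y ω := fun ω => le_max_right _ _
  have hYm : AEMeasurable Y μ := by
    have h1 : AEMeasurable (fun ω => Y ω ^ 2) μ := hsm.aemeasurable
    have h2 : AEMeasurable (fun ω => Real.sqrt (Y ω ^ 2)) μ :=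
      Real.continuous_sqrt.measurable.comp_aemeasurable h1
    refine h2.congr (Filter.Eventually.of_forall fun ω => ?_)
    exact Real.sqrt_sq (hYnn ω)
  rw [integral_eq_lintegral_of_nonneg_ae (Filter.Eventually.of_forall fun ω => sq_nonneg _) hsm]
  apply ENNReal.toReal_le_of_le_ofReal hRHS
  have hlayer : ∫⁻ ω, ENNReal.ofReal (Y ω ^ 2) ∂μ
      = ∫⁻ t in Set.Ioi (0:ℝ), μ {ω | t ≤ Y ω} * ENNReal.ofReal (2 * t) := by
    rw [← lintegral_comp_eq_lintegral_meas_le_mul (g := fun t : ℝ => 2 * t) μ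
        (Filter.Eventually.of_forall hYnn) hYm
        (fun t _ => (continuous_const.mul continuous_id).intervalIntegrable 0 t)
        ((ae_restrict_iff' measurableSet_Ioi).2
          (Filter.Eventually.of_forall fun t ht => by
            have : (0:ℝ) < t := ht
            show (0:ℝ) ≤ 2 * t
            linarith))]
    congr 1
    funext ω
    rw [intervalIntegral.integral_const_mul, integral_id]
    congr 1
    ring
  rw [hlayer]
  have htb : ∀ t ∈ Set.Ioi (0:ℝ),
      μ {ω | t ≤ Y ω} ≤ ENNReal.ofReal (Real.exp (-(a + t) ^ 2 / 2)) := by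
    intro t ht
    have h1 : (0:ℝ) < t := ht
    have hsub : {ω | t ≤ Y ω} ⊆ {ω | c + (a + t) ≤ X ω} := by
      intro ω hω
      have h2 : t ≤ max (X ω - (a + c)) 0 := hω
      rcases le_max_iff.1 h2 with h3 | h3
      · simp only [Set.mem_setOf_eq]; linarith
      · linarith
    exact le_trans (measure_mono hsub) (htail (a + t) (by linarith))
  have hstep : ∫⁻ t in Set.Ioi (0:ℝ), μ {ω | t ≤ Y ω} * ENNReal.ofReal (2 * t)
      ≤ ∫⁻ t in Set.Ioi (0:ℝ), ENNReal.ofReal (Real.exp (-(a + t) ^ 2 / 2) * (2 * t)) := by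
    apply lintegral_mono_ae
    filter_upwards [ae_restrict_mem measurableSet_Ioi] with t ht
    have h1 : (0:ℝ) < t := ht
    rw [ENNReal.ofReal_mul (Real.exp_nonneg _)]
    exact mul_le_mul_left (htb t ht) _
  refine le_trans hstep ?_
  obtain ⟨hintg, hbound⟩ := stmt12_aux a ha
  rw [← ofReal_integral_eq_lintegral_ofReal hintg
      ((ae_restrict_iff' measurableSet_Ioi).2 (Filter.Eventually.of_forall fun t ht => by
        have h1 : (0:ℝ) < t := ht
        positivity))]
  exact ENNReal.ofReal_le_ofReal hbound
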